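/- Let g : ℝ≥0 → ℝ>0 be differentiable with g'(t) + C g(t)^α ≤ 0 for all t ≥ 0, where C > 0 and 1 < α < 2. Then there exists a constant C' > 0 such that 0 < g(t) ≤ C' (1 + t)^{-1/(α-1)} for all t ≥ 0. -/

import Mathlib

theorem stmt_2 (g : ℝ → ℝ) (C α : ℝ) (hC : 0 < C) (hα : 1 < α) (hα2 : α < 2)
    (hg : Differentiable ℝ g) (hgpos : ∀ t ≥ 0, 0 < g t)
    (hdec : ∀ t ≥ 0, deriv g t + C * g t ^ α ≤ 0) :
    ∃ C' > 0, ∀ t ≥ 0, g t ≤ C' * (1 + t) ^ (-(1 / (α - 1))) := by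
  set β : ℝ := α - 1 with hβdef
  have hβ : 0 < β := by simp [hβdef]; linarith
  set K : ℝ := C * β with hKdef
  have hK : 0 < K := mul_pos hC hβ
  -- h = g ^ (-β)
  set h : ℝ → ℝ := fun t => g t ^ (-β) with hhdef
  set φ : ℝ → ℝ := fun t => h t - K * t with hφdef
  -- derivative facts at points t ≥ 0
  have hderiv : ∀ t ≥ 0, HasDerivAt h (deriv g t * (-β) * g t ^ (-β - 1)) t := by
    intro t ht
    exact (hg t).hasDerivAt.rpow_const (Or.inl (ne_of_gt (hgpos t ht)))
  have hφderiv : ∀ t ≥ 0, HasDerivAt φ (deriv g t * (-β) * g t ^ (-β - 1) - K) t := by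
    intro t ht
    exact ((hderiv t ht).sub ((hasDerivAt_id t).const_mul K)).congr_deriv (by simp)
  have hφ' : ∀ t ≥ 0, 0 ≤ deriv g t * (-β) * g t ^ (-β - 1) - K := by
    intro t ht
    have hgt := hgpos t ht
    have h1 : deriv g t ≤ -(C * g t ^ α) := by linarith [hdec t ht]
    have h2 : C * g t ^ α * β ≤ deriv g t * (-β) := by nlinarith [hβ]
    have h3 : g t ^ α * g t ^ (-β - 1) = 1 := by
      rw [← Real.rpow_add hgt]
      norm_num [hβdef]
    have h4 : 0 < g t ^ (-β - 1) := Real.rpow_pos_of_pos hgt _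
    nlinarith [mul_le_mul_of_nonneg_right h2 h4.le]
  -- φ is monotone on [0, ∞)
  have hmono : MonotoneOn φ (Set.Ici (0 : ℝ)) := by
    apply monotoneOn_of_deriv_nonneg (convex_Ici 0)
    · intro t ht
      exact ((hφderiv t ht).continuousAt).continuousWithinAt
    · intro t ht
      rw [interior_Ici] at ht
      exact ((hφderiv t (le_of_lt ht)).differentiableAt).differentiableWithinAt
    · intro t ht
      rw [interior_Ici] at ht
      rw [(hφderiv t (le_of_lt ht)).deriv]
      exact hφ' t (le_of_lt ht)
  have hg0 := hgpos 0 le_rfl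
  have hh0 : 0 < h 0 := Real.rpow_pos_of_pos hg0 _
  set c : ℝ := min (h 0) K with hcdef
  have hc : 0 < c := lt_min hh0 hK
  refine ⟨c ^ (-(1 / β)), Real.rpow_pos_of_pos hc _, fun t ht => ?_⟩
  have hlow : h 0 + K * t ≤ h t := by
    have := hmono (Set.self_mem_Ici) (Set.mem_Ici.2 ht) ht
    simp only [hφdef] at this
    linarith [this]
  have hct : c * (1 + t) ≤ h t := by
    have h1 : c ≤ h 0 := min_le_left _ _
    have h2 : c ≤ K := min_le_right _ _
    nlinarith
  have hcpos : 0 < c * (1 + t) := by positivity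
  -- g t = (h t) ^ (-(1/β))
  have hgt := hgpos t ht
  have hrepr : g t = h t ^ (-(1 / β)) := by
    simp only [hhdef]
    rw [← Real.rpow_mul hgt.le]
    rw [show -β * -(1 / β) = 1 by field_simp]
    exact (Real.rpow_one _).symm
  rw [hrepr]
  calc h t ^ (-(1 / β)) ≤ (c * (1 + t)) ^ (-(1 / β)) := by
        apply Real.rpow_le_rpow_of_nonpos hcpos hct
        simp [le_of_lt, one_div, inv_nonneg, hβ.le]
    _ = c ^ (-(1 / β)) * (1 + t) ^ (-(1 / β)) :=
        Real.mul_rpow hc.le (by linarith)
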